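/- Let A : U → Mat_{m×m}(ℂ) be a holomorphic matrix-valued map on a connected open set U ⊆ ℂ², let v ∈ ℂ^m be nonzero, and suppose that for every y ∈ U the holomorphic map x ↦ (A(x) - A(y))v has y as an isolated zero. Then the map f : U → ℂ^m, f(y) = A(y)v, has discrete fibers, and there is a nonempty open subset U₀ ⊆ U such that for every y₀ ∈ U₀, y₀ is a simple (multiplicity-one) zero of x ↦ f(x) - f(y₀). -/

import Mathlib

open Matrix

open Set Metric Filter Topology

namespace Stmt14Aux

variable {F : Type*} [NormedAddCommGroup F] [NormedSpace ℂ F] [CompleteSpace F]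

/-- Cauchy estimate for the derivative at the center of a disc. -/
lemma cauchy_deriv_bound {g : ℂ → F} {R C : ℝ} (hR : 0 < R)
    (hg : DifferentiableOn ℂ g (closedBall 0 R))
    (hC : ∀ z ∈ sphere (0:ℂ) R, ‖g z‖ ≤ C) : ‖deriv g 0‖ ≤ C / R := by
  have hC0 : 0 ≤ C := by
    refine le_trans (norm_nonneg (g R)) (hC _ ?_)
    simp [mem_sphere_zero_iff_norm, abs_of_pos hR]
  lift R to NNReal using hR.le with R hR'
  have hR0 : 0 < R := by exact_mod_cast hR
  have hp : HasFPowerSeriesOnBall g (cauchyPowerSeries g 0 R) 0 R :=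
    hg.hasFPowerSeriesOnBall hR0
  have hd : deriv g 0 = cauchyPowerSeries g 0 R 1 (fun _ => (1:ℂ)) :=
    hp.hasFPowerSeriesAt.deriv
  rw [hd, cauchyPowerSeries_apply, norm_smul]
  have h2π : ‖(2 * (Real.pi:ℂ) * Complex.I)⁻¹‖ = (2 * Real.pi)⁻¹ := by
    simp [norm_inv, Real.pi_nonneg]
  have hb : ∀ z ∈ sphere (0:ℂ) (R:ℝ),
      ‖((1:ℂ) / (z - 0)) ^ 1 • (z - 0)⁻¹ • g z‖ ≤ (R:ℝ)⁻¹ * ((R:ℝ)⁻¹ * C) := by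
    intro z hz
    rw [mem_sphere_zero_iff_norm] at hz
    have hz0 : ‖z‖ = (R:ℝ) := hz
    rw [norm_smul, norm_smul]
    simp only [sub_zero, pow_one, norm_div, norm_one, norm_inv, hz0]
    have : 1 / (R:ℝ) = (R:ℝ)⁻¹ := one_div _
    rw [this]
    gcongr
    exact hC z (by rwa [mem_sphere_zero_iff_norm])
  have hint := circleIntegral.norm_integral_le_of_norm_le_const (c := (0:ℂ))
    (f := fun z => ((1:ℂ) / (z - 0)) ^ 1 • (z - 0)⁻¹ • g z) hR.le hb
  calc ‖(2 * (Real.pi:ℂ) * Complex.I)⁻¹‖ *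
        ‖∮ z in C(0, (R:ℝ)), ((1:ℂ) / (z - 0)) ^ 1 • (z - 0)⁻¹ • g z‖
      ≤ (2 * Real.pi)⁻¹ * (2 * Real.pi * (R:ℝ) * ((R:ℝ)⁻¹ * ((R:ℝ)⁻¹ * C))) := by
        rw [h2π]; gcongr
    _ = C / R := by
        field_simp
  done


lemma slice_hasDerivAt {f : ℂ × ℂ → F} {y : ℂ × ℂ} (u : ℂ × ℂ)
    (hd : DifferentiableAt ℂ f y) :
    HasDerivAt (fun t : ℂ => f (y + t • u)) (fderiv ℂ f y u) 0 := by
  have h1 : HasDerivAt (fun t : ℂ => y + t • u) u 0 := by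
    simpa using ((hasDerivAt_id (0:ℂ)).smul_const u).const_add y
  have h2 : HasFDerivAt f (fderiv ℂ f y) ((fun t : ℂ => y + t • u) 0) := by
    simpa using hd.hasFDerivAt
  exact h2.comp_hasDerivAt 0 h1

lemma fderiv_lip {f : ℂ × ℂ → F} {U : Set (ℂ × ℂ)} (hU : IsOpen U)
    (hf : DifferentiableOn ℂ f U) {y₀ : ℂ × ℂ} (hy₀ : y₀ ∈ U)
    (u : ℂ × ℂ) (hu : ‖u‖ ≤ 1) :
    ∃ ρ > 0, ball y₀ ρ ⊆ U ∧ ∃ K : NNReal,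
      LipschitzOnWith K (fun y => fderiv ℂ f y u) (ball y₀ ρ) := by
  obtain ⟨ε, hε, hbU⟩ := Metric.isOpen_iff.mp hU y₀ hy₀
  set r := ε / 4 with hrdef
  have hr : 0 < r := by positivity
  have hball : closedBall y₀ (2 * r) ⊆ U := by
    refine Subset.trans ?_ hbU
    intro x hx
    have : dist x y₀ ≤ 2 * r := mem_closedBall.mp hx
    have : dist x y₀ < ε := by rw [hrdef] at this; linarith
    exact mem_ball.mpr this
  obtain ⟨C0, hC0⟩ := (isCompact_closedBall y₀ (2*r)).exists_bound_of_continuousOn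
    (hf.continuousOn.mono hball)
  set C := max C0 0 with hCdef
  have hCnn : 0 ≤ C := le_max_right _ _
  have hC : ∀ x ∈ closedBall y₀ (2*r), ‖f x‖ ≤ C :=
    fun x hx => (hC0 x hx).trans (le_max_left _ _)
  have hmem : ∀ (y : ℂ × ℂ), ∀ (s : ℝ), dist y y₀ + s ≤ 2*r →
      ∀ (w : ℂ × ℂ), ‖w‖ ≤ 1 → ∀ t : ℂ, t ∈ closedBall (0:ℂ) s →
      y + t • w ∈ closedBall y₀ (2*r) := by
    intro y s hs w hw t ht
    have h1 : ‖t‖ ≤ s := by simpa [dist_eq_norm] using ht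
    have h2 : dist (y + t • w) y₀ ≤ ‖t • w‖ + dist y y₀ := by
      calc dist (y + t • w) y₀ ≤ dist (y + t • w) y + dist y y₀ := dist_triangle _ _ _
        _ = ‖t • w‖ + dist y y₀ := by rw [dist_eq_norm]; simp
    have h3 : ‖t • w‖ ≤ s := by
      rw [norm_smul]
      calc ‖t‖ * ‖w‖ ≤ s * 1 := by
            apply mul_le_mul h1 hw (norm_nonneg _) ((norm_nonneg t).trans h1)
        _ = s := mul_one s
    exact mem_closedBall.mpr (by linarith)
  have hdiffslice : ∀ (y : ℂ × ℂ), ∀ (s : ℝ), dist y y₀ + s ≤ 2*r →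
      ∀ (w : ℂ × ℂ), ‖w‖ ≤ 1 →
      DifferentiableOn ℂ (fun t : ℂ => f (y + t • w)) (closedBall 0 s) := by
    intro y s hs w hw
    refine hf.comp ?_ ?_
    · exact ((differentiable_id.smul_const w).const_add y).differentiableOn
    · intro t ht
      exact hball (hmem y s hs w hw t ht)
  -- directional derivative bound
  have hdir : ∀ y ∈ ball y₀ r, ∀ (w : ℂ × ℂ), ‖w‖ ≤ 1 → ‖fderiv ℂ f y w‖ ≤ C / r := by
    intro y hy w hw
    have hyU : y ∈ U := hball (mem_closedBall.mpr (by have := mem_ball.mp hy; linarith))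
    have hgeo : dist y y₀ + r ≤ 2*r := by
      have := mem_ball.mp hy; linarith
    have hD := slice_hasDerivAt (f := f) w (hf.differentiableAt (hU.mem_nhds hyU))
    rw [← hD.deriv]
    refine cauchy_deriv_bound hr (hdiffslice y r hgeo w hw) ?_
    intro z hz
    exact hC _ (hmem y r hgeo w hw z (sphere_subset_closedBall hz))
  -- operator norm bound, hence f is Lipschitz on ball y₀ r
  have hop : ∀ y ∈ ball y₀ r, ‖fderiv ℂ f y‖ ≤ 2 * (C / r) := by
    intro y hy
    refine ContinuousLinearMap.opNorm_le_bound _ (by positivity) ?_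
    intro z
    have hzdec : z = z.1 • (((1:ℂ),(0:ℂ)) : ℂ × ℂ) + z.2 • (((0:ℂ),(1:ℂ)) : ℂ × ℂ) := by
      ext <;> simp
    have he1 : ‖(((1:ℂ),(0:ℂ)) : ℂ × ℂ)‖ ≤ 1 := by simp [Prod.norm_def]
    have he2 : ‖(((0:ℂ),(1:ℂ)) : ℂ × ℂ)‖ ≤ 1 := by simp [Prod.norm_def]
    calc ‖fderiv ℂ f y z‖
        = ‖z.1 • fderiv ℂ f y ((1:ℂ),(0:ℂ)) + z.2 • fderiv ℂ f y ((0:ℂ),(1:ℂ))‖ := by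
          conv_lhs => rw [hzdec]
          rw [map_add, _root_.map_smul, _root_.map_smul]
      _ ≤ ‖z.1‖ * ‖fderiv ℂ f y ((1:ℂ),(0:ℂ))‖ + ‖z.2‖ * ‖fderiv ℂ f y ((0:ℂ),(1:ℂ))‖ := by
          refine (norm_add_le _ _).trans ?_
          rw [norm_smul, norm_smul]
      _ ≤ ‖z‖ * (C / r) + ‖z‖ * (C / r) := by
          have h1 := hdir y hy _ he1
          have h2 := hdir y hy _ he2
          have hz1 : ‖z.1‖ ≤ ‖z‖ := norm_fst_le z
          have hz2 : ‖z.2‖ ≤ ‖z‖ := norm_snd_le z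
          have hCr : 0 ≤ C / r := by positivity
          gcongr
      _ = 2 * (C / r) * ‖z‖ := by ring
  set K1 : NNReal := (2 * (C / r)).toNNReal with hK1def
  have hK1 : (K1 : ℝ) = 2 * (C / r) := Real.coe_toNNReal _ (by positivity)
  have hlipf : LipschitzOnWith K1 f (ball y₀ r) := by
    refine Convex.lipschitzOnWith_of_nnnorm_fderiv_le (𝕜 := ℂ) (fun x hx => ?_) (fun x hx => ?_) (convex_ball y₀ r)
    · exact hf.differentiableAt (hU.mem_nhds (hball
        (mem_closedBall.mpr (by have := mem_ball.mp hx; linarith))))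
    · rw [← norm_toNNReal, hK1def]
      exact Real.toNNReal_mono (hop x hx)
  -- Lipschitz bound for the directional derivative
  refine ⟨r/2, by positivity, ?_, (2 * (K1:ℝ) / r).toNNReal, ?_⟩
  · intro x hx
    exact hball (mem_closedBall.mpr (by have := mem_ball.mp hx; linarith))
  · rw [lipschitzOnWith_iff_dist_le_mul]
    intro x hx y hy
    have hxU : x ∈ U := hball (mem_closedBall.mpr (by have := mem_ball.mp hx; linarith))
    have hyU : y ∈ U := hball (mem_closedBall.mpr (by have := mem_ball.mp hy; linarith))
    have hgx : dist x y₀ + r/2 ≤ 2*r := by have := mem_ball.mp hx; linarith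
    have hgy : dist y y₀ + r/2 ≤ 2*r := by have := mem_ball.mp hy; linarith
    have hdiff : DifferentiableOn ℂ
        (fun t : ℂ => f (x + t • u) - f (y + t • u)) (closedBall 0 (r/2)) :=
      (hdiffslice x (r/2) hgx u hu).sub (hdiffslice y (r/2) hgy u hu)
    have hbd : ∀ z ∈ sphere (0:ℂ) (r/2),
        ‖f (x + z • u) - f (y + z • u)‖ ≤ (K1 : ℝ) * dist x y := by
      intro z hz
      have hz' : z ∈ closedBall (0:ℂ) (r/2) := sphere_subset_closedBall hz
      have hx' : x + z • u ∈ ball y₀ r := by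
        have := hmem x (r/2) hgx u hu z hz'
        have h1 : ‖z‖ ≤ r/2 := by simpa [dist_eq_norm] using hz'
        have h2 : dist (x + z • u) y₀ ≤ ‖z • u‖ + dist x y₀ := by
          calc dist (x + z • u) y₀ ≤ dist (x + z • u) x + dist x y₀ := dist_triangle _ _ _
            _ = ‖z • u‖ + dist x y₀ := by rw [dist_eq_norm]; simp
        have h3 : ‖z • u‖ ≤ r/2 := by
          rw [norm_smul]
          calc ‖z‖ * ‖u‖ ≤ (r/2) * 1 :=
                mul_le_mul h1 hu (norm_nonneg _) (by positivity)
            _ = r/2 := mul_one _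
        have h4 := mem_ball.mp hx
        exact mem_ball.mpr (by linarith)
      have hy' : y + z • u ∈ ball y₀ r := by
        have h1 : ‖z‖ ≤ r/2 := by simpa [dist_eq_norm] using hz'
        have h2 : dist (y + z • u) y₀ ≤ ‖z • u‖ + dist y y₀ := by
          calc dist (y + z • u) y₀ ≤ dist (y + z • u) y + dist y y₀ := dist_triangle _ _ _
            _ = ‖z • u‖ + dist y y₀ := by rw [dist_eq_norm]; simp
        have h3 : ‖z • u‖ ≤ r/2 := by
          rw [norm_smul]
          calc ‖z‖ * ‖u‖ ≤ (r/2) * 1 :=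
                mul_le_mul h1 hu (norm_nonneg _) (by positivity)
            _ = r/2 := mul_one _
        have h4 := mem_ball.mp hy
        exact mem_ball.mpr (by linarith)
      have := lipschitzOnWith_iff_dist_le_mul.mp hlipf _ hx' _ hy'
      rw [← dist_eq_norm]
      calc dist (f (x + z • u)) (f (y + z • u)) ≤ (K1 : ℝ) * dist (x + z • u) (y + z • u) := this
        _ = (K1 : ℝ) * dist x y := by rw [dist_add_right]
    have hderx := slice_hasDerivAt (f := f) u (hf.differentiableAt (hU.mem_nhds hxU))
    have hdery := slice_hasDerivAt (f := f) u (hf.differentiableAt (hU.mem_nhds hyU))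
    have hderd : deriv (fun t : ℂ => f (x + t • u) - f (y + t • u)) 0
        = fderiv ℂ f x u - fderiv ℂ f y u := (hderx.sub hdery).deriv
    have := cauchy_deriv_bound (by positivity : (0:ℝ) < r/2) hdiff hbd
    rw [hderd] at this
    rw [dist_eq_norm]
    calc ‖fderiv ℂ f x u - fderiv ℂ f y u‖ ≤ ((K1:ℝ) * dist x y) / (r/2) := this
      _ = (2 * (K1:ℝ) / r) * dist x y := by field_simp
      _ ≤ ((2 * (K1:ℝ) / r).toNNReal : ℝ) * dist x y := by
          gcongr
          exact Real.le_coe_toNNReal _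

lemma fderiv_apply_continuousOn {f : ℂ × ℂ → F} {U : Set (ℂ × ℂ)} (hU : IsOpen U)
    (hf : DifferentiableOn ℂ f U) (u : ℂ × ℂ) (hu : ‖u‖ ≤ 1) :
    ContinuousOn (fun y => fderiv ℂ f y u) U := by
  intro y₀ hy₀
  obtain ⟨ρ, hρ, hsub, K, hlip⟩ := fderiv_lip hU hf hy₀ u hu
  exact (hlip.continuousOn.continuousAt (ball_mem_nhds y₀ hρ)).continuousWithinAt



lemma eventually_ne_of_hasDerivAt_ne {γ : ℝ → ℂ × ℂ} {d : ℂ × ℂ}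
    (h : HasDerivAt γ d 0) (hd : d ≠ 0) :
    ∀ᶠ t in 𝓝[≠] (0:ℝ), γ t ≠ γ 0 := by
  have hd0 : 0 < ‖d‖ := norm_pos_iff.mpr hd
  have ho := (hasDerivAt_iff_isLittleO.mp h).bound (c := ‖d‖/2) (by positivity)
  filter_upwards [eventually_nhdsWithin_of_eventually_nhds ho,
    eventually_mem_nhdsWithin] with t hb ht
  intro hc
  rw [hc] at hb
  simp only [sub_zero, Real.norm_eq_abs] at hb
  rw [sub_self, zero_sub, norm_neg, norm_smul, Real.norm_eq_abs] at hb
  have htne : t ≠ 0 := ht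
  have habs : 0 < |t| := abs_pos.mpr htne
  nlinarith

end Stmt14Aux

open Stmt14Aux


/-- Let `A : U → Mat_{m×m}(ℂ)` be a holomorphic matrix-valued map on a connected
open set `U ⊆ ℂ²` and `v ∈ ℂ^m` nonzero, such that for every `y ∈ U` the map
`x ↦ (A(x) - A(y))v` has `y` as an isolated zero. Then `f : y ↦ A(y)v` has
discrete fibers on `U`, and there is a nonempty open `U₀ ⊆ U` on which every
point `y₀` is a simple zero of `x ↦ f(x) - f(y₀)` (the differential of `f`
at `y₀` is injective). -/
theorem stmt14 (m : ℕ) (U : Set (ℂ × ℂ)) (hU : IsOpen U) (hUconn : IsConnected U)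
    (A : ℂ × ℂ → Matrix (Fin m) (Fin m) ℂ)
    (hA : ∀ i j : Fin m, DifferentiableOn ℂ (fun x => A x i j) U)
    (v : Fin m → ℂ) (hv : v ≠ 0)
    (hiso : ∀ y ∈ U, ∀ᶠ x in nhdsWithin y {y}ᶜ, (A x - A y).mulVec v ≠ 0) :
    (∀ y ∈ U, ∀ᶠ x in nhdsWithin y {y}ᶜ,
        (A x).mulVec v ≠ (A y).mulVec v) ∧
    ∃ U₀ : Set (ℂ × ℂ), IsOpen U₀ ∧ U₀.Nonempty ∧ U₀ ⊆ U ∧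
      ∀ y₀ ∈ U₀, Function.Injective
        (fderiv ℂ (fun y => (A y).mulVec v) y₀) := by
  classical
  set f : ℂ × ℂ → (Fin m → ℂ) := fun y => (A y).mulVec v with hfdef
  have hfd : DifferentiableOn ℂ f U := by
    rw [differentiableOn_pi]
    intro i
    have hfi : (fun y => f y i) = fun y => ∑ j, A y i j * v j := by
      funext y; simp [hfdef, Matrix.mulVec, dotProduct]
    rw [hfi]
    exact DifferentiableOn.fun_sum (fun j _ => (hA i j).mul_const _)
  have part1 : ∀ y ∈ U, ∀ᶠ x in 𝓝[≠] y, f x ≠ f y := by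
    intro y hy
    filter_upwards [hiso y hy] with x hx heq
    exact hx (by rw [Matrix.sub_mulVec]; exact sub_eq_zero.mpr heq)
  refine ⟨part1, ?_⟩
  set e1 : ℂ × ℂ := ((1:ℂ),(0:ℂ)) with he1def
  set e2 : ℂ × ℂ := ((0:ℂ),(1:ℂ)) with he2def
  have he1 : ‖e1‖ ≤ 1 := by simp [he1def, Prod.norm_def]
  have he2 : ‖e2‖ ≤ 1 := by simp [he2def, Prod.norm_def]
  have hdecomp : ∀ (T : (ℂ × ℂ) →L[ℂ] (Fin m → ℂ)) (z : ℂ × ℂ),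
      T z = z.1 • T e1 + z.2 • T e2 := by
    intro T z
    have hz : z = z.1 • e1 + z.2 • e2 := by ext <;> simp [he1def, he2def]
    conv_lhs => rw [hz]
    rw [map_add, _root_.map_smul, _root_.map_smul]
  by_cases hcase : ∃ y₁ ∈ U, ∃ i j : Fin m,
      fderiv ℂ f y₁ e1 i * fderiv ℂ f y₁ e2 j
        - fderiv ℂ f y₁ e2 i * fderiv ℂ f y₁ e1 j ≠ 0
  · obtain ⟨y₁, hy₁, i, j, hM1⟩ := hcase
    set M : ℂ × ℂ → ℂ := fun y => fderiv ℂ f y e1 i * fderiv ℂ f y e2 j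
        - fderiv ℂ f y e2 i * fderiv ℂ f y e1 j with hMdef
    have hMc : ContinuousOn M U := by
      have h1 := fderiv_apply_continuousOn hU hfd e1 he1
      have h2 := fderiv_apply_continuousOn hU hfd e2 he2
      have c1i : ContinuousOn (fun y => fderiv ℂ f y e1 i) U :=
        (continuous_apply i).comp_continuousOn h1
      have c1j : ContinuousOn (fun y => fderiv ℂ f y e1 j) U :=
        (continuous_apply j).comp_continuousOn h1
      have c2i : ContinuousOn (fun y => fderiv ℂ f y e2 i) U :=
        (continuous_apply i).comp_continuousOn h2
      have c2j : ContinuousOn (fun y => fderiv ℂ f y e2 j) U :=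
        (continuous_apply j).comp_continuousOn h2
      exact (c1i.mul c2j).sub (c2i.mul c1j)
    refine ⟨U ∩ M ⁻¹' {0}ᶜ, hMc.isOpen_inter_preimage hU isOpen_compl_singleton,
      ⟨y₁, hy₁, by simpa using hM1⟩, inter_subset_left, ?_⟩
    rintro y₀ ⟨hy₀U, hy₀M⟩
    have hMne : M y₀ ≠ 0 := by simpa using hy₀M
    have hker : ∀ z : ℂ × ℂ, fderiv ℂ f y₀ z = 0 → z = 0 := by
      intro z hz
      have hz1 : z.1 • fderiv ℂ f y₀ e1 + z.2 • fderiv ℂ f y₀ e2 = 0 := by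
        rw [← hdecomp (fderiv ℂ f y₀) z]; exact hz
      have hi : z.1 * fderiv ℂ f y₀ e1 i + z.2 * fderiv ℂ f y₀ e2 i = 0 := by
        have := congrFun hz1 i
        simpa [smul_eq_mul] using this
      have hj : z.1 * fderiv ℂ f y₀ e1 j + z.2 * fderiv ℂ f y₀ e2 j = 0 := by
        have := congrFun hz1 j
        simpa [smul_eq_mul] using this
      have hz1' : z.1 * M y₀ = 0 := by
        rw [hMdef]
        linear_combination (fderiv ℂ f y₀ e2 j) * hi - (fderiv ℂ f y₀ e2 i) * hj
      have hz2' : z.2 * M y₀ = 0 := by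
        rw [hMdef]
        linear_combination (fderiv ℂ f y₀ e1 i) * hj - (fderiv ℂ f y₀ e1 j) * hi
      have h1 : z.1 = 0 := by
        rcases mul_eq_zero.mp hz1' with h | h
        · exact h
        · exact absurd h hMne
      have h2 : z.2 = 0 := by
        rcases mul_eq_zero.mp hz2' with h | h
        · exact h
        · exact absurd h hMne
      ext <;> simp [h1, h2]
    intro a b hab
    have : fderiv ℂ f y₀ (a - b) = 0 := by rw [map_sub, hab, sub_self]
    have := hker _ this
    exact sub_eq_zero.mp this
  · exfalso
    push_neg at hcase
    have HM : ∀ y ∈ U, ∀ i j : Fin m,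
        fderiv ℂ f y e1 i * fderiv ℂ f y e2 j = fderiv ℂ f y e2 i * fderiv ℂ f y e1 j := by
      intro y hy i j
      exact sub_eq_zero.mp (hcase y hy i j)
    by_cases hdeg : ∀ y ∈ U, fderiv ℂ f y = 0
    · -- derivative vanishes identically: f locally constant, contradicting part1
      obtain ⟨y₀, hy₀⟩ := hUconn.nonempty
      obtain ⟨r, hr, hbU⟩ := Metric.isOpen_iff.mp hU y₀ hy₀
      have hconst : ∀ x ∈ ball y₀ r, f x = f y₀ := by
        intro x hx
        refine Convex.is_const_of_fderivWithin_eq_zero (𝕜 := ℂ) (convex_ball y₀ r)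
          (hfd.mono hbU) (fun z hz => ?_) hx (mem_ball_self hr)
        rw [fderivWithin_of_isOpen isOpen_ball hz]
        exact hdeg z (hbU hz)
      have hball : ∀ᶠ x in 𝓝[≠] y₀, x ∈ ball y₀ r :=
        eventually_nhdsWithin_of_eventually_nhds
          (ball_mem_nhds y₀ hr)
      obtain ⟨x, hx1, hx2⟩ := ((part1 y₀ hy₀).and hball).exists
      exact hx1 (hconst x hx2)
    · push_neg at hdeg
      obtain ⟨y₀, hy₀, hne⟩ := hdeg
      -- find a component k where a partial derivative is nonzero
      have hk : ∃ k : Fin m, fderiv ℂ f y₀ e1 k ≠ 0 ∨ fderiv ℂ f y₀ e2 k ≠ 0 := by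
        by_contra hcon
        push_neg at hcon
        apply hne
        apply ContinuousLinearMap.ext
        intro z
        rw [hdecomp (fderiv ℂ f y₀) z]
        funext k
        have h1 := (hcon k).1
        have h2 := (hcon k).2
        simp [h1, h2]
      obtain ⟨k, hk⟩ := hk
      set w : ℂ × ℂ → ℂ × ℂ := fun y => (-(fderiv ℂ f y e2 k), fderiv ℂ f y e1 k) with hwdef
      have hw0 : w y₀ ≠ 0 := by
        rcases hk with h | h
        · intro hc
          apply h
          have := congrArg Prod.snd hc
          simpa [hwdef] using this
        · intro hc
          apply h
          have := congrArg Prod.fst hc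
          simpa [hwdef, neg_eq_zero] using this
      have hker : ∀ y ∈ U, fderiv ℂ f y (w y) = 0 := by
        intro y hy
        have hexp : fderiv ℂ f y (w y)
            = (-(fderiv ℂ f y e2 k)) • fderiv ℂ f y e1
              + (fderiv ℂ f y e1 k) • fderiv ℂ f y e2 := by
          rw [hdecomp (fderiv ℂ f y) (w y)]
        funext i
        rw [hexp]
        simp only [Pi.add_apply, Pi.smul_apply, smul_eq_mul, Pi.zero_apply]
        linear_combination (-1 : ℂ) * HM y hy i k
      -- Lipschitz bound for w near y₀
      obtain ⟨ρ1, hρ1, hsub1, K1, hlip1⟩ := fderiv_lip hU hfd hy₀ e1 he1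
      obtain ⟨ρ2, hρ2, hsub2, K2, hlip2⟩ := fderiv_lip hU hfd hy₀ e2 he2
      set ρ := min ρ1 ρ2 with hρdef
      have hρ : 0 < ρ := lt_min hρ1 hρ2
      have hsubU : ball y₀ ρ ⊆ U := fun x hx => hsub1 (ball_subset_ball (min_le_left _ _) hx)
      set K : NNReal := K1 + K2 with hKdef
      have hlipw : LipschitzOnWith K w (ball y₀ ρ) := by
        rw [lipschitzOnWith_iff_dist_le_mul]
        intro x hx y hy
        have h1 : dist (fderiv ℂ f x e1 k) (fderiv ℂ f y e1 k) ≤ (K1:ℝ) * dist x y := by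
          refine le_trans (dist_le_pi_dist _ _ k) ?_
          exact lipschitzOnWith_iff_dist_le_mul.mp
            (hlip1.mono (ball_subset_ball (min_le_left _ _))) x hx y hy
        have h2 : dist (fderiv ℂ f x e2 k) (fderiv ℂ f y e2 k) ≤ (K2:ℝ) * dist x y := by
          refine le_trans (dist_le_pi_dist _ _ k) ?_
          exact lipschitzOnWith_iff_dist_le_mul.mp
            (hlip2.mono (ball_subset_ball (min_le_right _ _))) x hx y hy
        have hKcoe : ((K1 + K2 : NNReal) : ℝ) = (K1:ℝ) + (K2:ℝ) := by push_cast; ring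
        rw [hKdef, hKcoe, Prod.dist_eq]
        have hdnn : 0 ≤ dist x y := dist_nonneg
        refine max_le ?_ ?_
        · rw [dist_neg_neg]
          nlinarith [dist_nonneg (x := fderiv ℂ f x e1 k) (y := fderiv ℂ f y e1 k),
            NNReal.coe_nonneg K1]
        · nlinarith [dist_nonneg (x := fderiv ℂ f x e2 k) (y := fderiv ℂ f y e2 k),
            NNReal.coe_nonneg K2]
      -- bound for w on the closed half-ball
      set Cw : ℝ := ‖w y₀‖ + (K:ℝ) * ρ with hCwdef
      have hCw0 : 0 ≤ Cw := by positivity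
      have hwb : ∀ x ∈ closedBall y₀ (ρ/2), ‖w x‖ ≤ Cw := by
        intro x hx
        have hx' : x ∈ ball y₀ ρ := lt_of_le_of_lt (mem_closedBall.mp hx) (by linarith)
        have h1 : dist (w x) (w y₀) ≤ (K:ℝ) * dist x y₀ :=
          lipschitzOnWith_iff_dist_le_mul.mp hlipw x hx' y₀ (mem_ball_self hρ)
        have h2 : dist x y₀ ≤ ρ/2 := mem_closedBall.mp hx
        calc ‖w x‖ ≤ ‖w y₀‖ + dist (w x) (w y₀) := by
              rw [dist_eq_norm]
              have := norm_add_le (w y₀) (w x - w y₀)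
              simpa using this
          _ ≤ ‖w y₀‖ + (K:ℝ) * (ρ/2) := by
              have := mul_le_mul_of_nonneg_left h2 (NNReal.coe_nonneg K)
              linarith
          _ ≤ Cw := by
              rw [hCwdef]
              have : (K:ℝ) * (ρ/2) ≤ (K:ℝ) * ρ := by
                have := NNReal.coe_nonneg K
                nlinarith
              linarith
      set ε : ℝ := (ρ/2) / (Cw + 1) with hεdef
      have hε : 0 < ε := by positivity
      have hρ2 : (((ρ/2).toNNReal : NNReal) : ℝ) = ρ/2 := Real.coe_toNNReal _ (by positivity)
      have hCwc : ((Cw.toNNReal : NNReal) : ℝ) = Cw := Real.coe_toNNReal _ hCw0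
      have h0Icc : (0:ℝ) ∈ Icc (0 - ε) (0 + ε) := ⟨by simp; linarith, by simp; linarith⟩
      have hpl : IsPicardLindelof (tmin := 0 - ε) (tmax := 0 + ε) (fun _ : ℝ => w) ⟨0, h0Icc⟩
          y₀ (ρ/2).toNNReal 0 Cw.toNNReal K := by
        refine ⟨?_, ?_, ?_, ?_⟩
        · intro t _
          rw [hρ2]
          exact hlipw.mono (fun x hx => lt_of_le_of_lt (mem_closedBall.mp hx) (by linarith))
        · intro x _
          exact continuousOn_const
        · intro t _ x hx
          rw [hρ2] at hx
          rw [hCwc]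
          exact hwb x hx
        · have : max ((0:ℝ) + ε - ((⟨0, h0Icc⟩ : Icc (0 - ε) (0 + ε)) : ℝ))
              (((⟨0, h0Icc⟩ : Icc (0 - ε) (0 + ε)) : ℝ) - (0 - ε)) = ε := by
            simp
          rw [hCwc, hρ2, NNReal.coe_zero, this, sub_zero, hεdef]
          rw [div_eq_mul_inv, ← mul_assoc]
          have h1 : Cw * (ρ/2) * (Cw + 1)⁻¹ ≤ (Cw + 1) * (ρ/2) * (Cw + 1)⁻¹ := by
            have : (0:ℝ) < (Cw + 1)⁻¹ := by positivity
            nlinarith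
          calc Cw * (ρ/2) * (Cw + 1)⁻¹ ≤ (Cw + 1) * (ρ/2) * (Cw + 1)⁻¹ := h1
            _ = ρ/2 := by field_simp
      obtain ⟨γ, hγ0, hγ⟩ := hpl.exists_eq_forall_mem_Icc_hasDerivWithinAt₀
      replace hγ0 : γ 0 = y₀ := hγ0
      have hγt : ∀ t ∈ Ioo (0 - ε) (0 + ε), HasDerivAt γ (w (γ t)) t := fun t ht =>
        (hγ t (Ioo_subset_Icc_self ht)).hasDerivAt (Icc_mem_nhds ht.1 ht.2)
      have h0mem : (0:ℝ) ∈ Ioo (0 - ε) (0 + ε) := by constructor <;> simp [hε]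
      have hcont0 : ContinuousAt γ 0 := (hγt 0 h0mem).continuousAt
      obtain ⟨δ, hδ, hδball⟩ : ∃ δ > 0, ∀ t : ℝ, dist t 0 < δ → dist (γ t) y₀ < ρ := by
        have := Metric.continuousAt_iff.mp hcont0 ρ hρ
        obtain ⟨δ, hδ, h⟩ := this
        exact ⟨δ, hδ, fun t ht => by rw [← hγ0]; exact h ht⟩
      set δ' : ℝ := min δ ε with hδ'def
      have hδ' : 0 < δ' := lt_min hδ hε
      have hmemball : ∀ t ∈ Ioo (-δ') δ', γ t ∈ ball y₀ ρ := by
        intro t ht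
        apply hδball
        rw [Real.dist_eq, sub_zero]
        rw [abs_lt]
        exact ⟨by have := ht.1; have : δ' ≤ δ := min_le_left _ _; linarith [ht.1, this],
          lt_of_lt_of_le ht.2 (min_le_left _ _)⟩
      have hconst : ∀ t ∈ Ioo (-δ') δ', f (γ t) = f y₀ := by
        have hder : ∀ t ∈ Ioo (-δ') δ', HasDerivAt (f ∘ γ) 0 t := by
          intro t ht
          have htU : γ t ∈ U := hsubU (hmemball t ht)
          have htε : t ∈ Ioo (0 - ε) (0 + ε) := by
            constructor
            · have := ht.1; have h2 : δ' ≤ ε := min_le_right _ _; simp; linarith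
            · have := ht.2; have h2 : δ' ≤ ε := min_le_right _ _; simp; linarith
          have h1 : HasFDerivAt f ((fderiv ℂ f (γ t)).restrictScalars ℝ) (γ t) :=
            ((hfd.differentiableAt (hU.mem_nhds htU)).hasFDerivAt).restrictScalars ℝ
          have h2 := h1.comp_hasDerivAt t (hγt t htε)
          have h3 : ((fderiv ℂ f (γ t)).restrictScalars ℝ) (w (γ t)) = 0 := by
            have := hker (γ t) htU
            simpa using this
          rw [h3] at h2
          exact h2
        intro t ht
        have hconst' : (f ∘ γ) t = (f ∘ γ) 0 := by
          refine Convex.is_const_of_fderivWithin_eq_zero (𝕜 := ℝ) (convex_Ioo _ _)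
            (fun x hx => ((hder x hx).differentiableAt).differentiableWithinAt)
            (fun x hx => ?_) ht (by constructor <;> [linarith [hδ']; exact hδ'] )
          rw [fderivWithin_of_isOpen isOpen_Ioo hx, (hder x hx).hasFDerivAt.fderiv]
          ext s j
          simp
        simpa [hγ0] using hconst'
      have hγw : HasDerivAt γ (w y₀) 0 := by
        have := hγt 0 h0mem
        rwa [hγ0] at this
      have hnb : ∀ᶠ t in 𝓝[≠] (0:ℝ), γ t ≠ y₀ := by
        have := eventually_ne_of_hasDerivAt_ne hγw hw0
        rwa [hγ0] at this
      have htend : Tendsto γ (𝓝[≠] (0:ℝ)) (𝓝[≠] y₀) := by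
        rw [tendsto_nhdsWithin_iff]
        constructor
        · have h1 : Tendsto γ (𝓝 (0:ℝ)) (𝓝 y₀) := by
            have := hcont0.tendsto
            rwa [hγ0] at this
          exact h1.mono_left nhdsWithin_le_nhds
        · exact hnb
      have hF : ∀ᶠ t in 𝓝[≠] (0:ℝ), f (γ t) ≠ f y₀ := htend.eventually (part1 y₀ hy₀)
      have hIoo : ∀ᶠ t in 𝓝[≠] (0:ℝ), t ∈ Ioo (-δ') δ' :=
        eventually_nhdsWithin_of_eventually_nhds
          (Ioo_mem_nhds (by linarith) hδ')
      obtain ⟨t, ht1, ht2⟩ := (hF.and hIoo).exists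
      exact ht1 (hconst t ht2)
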